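/- Let C ∈ Matrix (Fin n) (Fin n) ℂ have a sectoral decomposition C = Tᴴ * D * T where T is invertible, D is diagonal with D k k = Complex.exp(φ k * Complex.I), and all φ k lie in the open interval (θ, θ + π) for some θ ∈ ℝ. Then for every x ∈ EuclideanSpace ℂ (Fin n) with ‖x‖ = 1, the number z = star x ⬝ᵥ C.mulVec x is nonzero and the unique a ∈ (θ, θ + π) with z = ‖z‖ * Complex.exp(a * Complex.I) satisfies (min over k of φ k) ≤ a ≤ (max over k of φ k); moreover both bounds are attained: there exist unit vectors x and y for which the corresponding angle equals max_k φ k and min_k φ k respectively. -/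

import Mathlib

open Matrix
open scoped Real

lemma sectoral_core {n : ℕ} (θ : ℝ) (φ : Fin n → ℝ) (hφ : ∀ k, φ k ∈ Set.Ioo θ (θ + π))
    (c : Fin n → ℝ) (hc : ∀ k, 0 ≤ c k) (hpos : ∃ k, 0 < c k)
    (z : ℂ) (hz : z = ∑ k, (c k : ℂ) * Complex.exp ((φ k : ℂ) * Complex.I)) :
    z ≠ 0 ∧
    (∃! a : ℝ, a ∈ Set.Ioo θ (θ + π) ∧
      z = (‖z‖ : ℂ) * Complex.exp ((a : ℂ) * Complex.I)) ∧
    (∀ a ∈ Set.Ioo θ (θ + π),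
      z = (‖z‖ : ℂ) * Complex.exp ((a : ℂ) * Complex.I) →
      (⨅ k, φ k) ≤ a ∧ a ≤ ⨆ k, φ k) := by
  have hre : z.re = ∑ k, c k * Real.cos (φ k) := by
    rw [hz, Complex.re_sum]
    refine Finset.sum_congr rfl fun k _ => ?_
    simp [Complex.exp_ofReal_mul_I_re, Complex.exp_ofReal_mul_I_im]
  have him : z.im = ∑ k, c k * Real.sin (φ k) := by
    rw [hz, Complex.im_sum]
    refine Finset.sum_congr rfl fun k _ => ?_
    simp [Complex.exp_ofReal_mul_I_re, Complex.exp_ofReal_mul_I_im]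
  -- key trig combos
  have keysin : ∀ t : ℝ, Real.cos t * z.im - Real.sin t * z.re
      = ∑ k, c k * Real.sin (φ k - t) := by
    intro t
    rw [hre, him, Finset.mul_sum, Finset.mul_sum, ← Finset.sum_sub_distrib]
    refine Finset.sum_congr rfl fun k _ => ?_
    rw [Real.sin_sub]; ring
  have keycos : ∀ t : ℝ, Real.cos t * z.re + Real.sin t * z.im
      = ∑ k, c k * Real.cos (φ k - t) := by
    intro t
    rw [hre, him, Finset.mul_sum, Finset.mul_sum, ← Finset.sum_add_distrib]
    refine Finset.sum_congr rfl fun k _ => ?_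
    rw [Real.cos_sub]; ring
  set t₀ : ℝ := θ + π / 2 with ht₀
  have hrepos : 0 < Real.cos t₀ * z.re + Real.sin t₀ * z.im := by
    rw [keycos]
    obtain ⟨k₀, hk₀⟩ := hpos
    refine Finset.sum_pos' (fun k _ => ?_) ⟨k₀, Finset.mem_univ _, ?_⟩
    · refine mul_nonneg (hc k) (le_of_lt (Real.cos_pos_of_mem_Ioo ?_))
      constructor
      · have := (hφ k).1; simp only [ht₀]; linarith
      · have := (hφ k).2; simp only [ht₀]; linarith
    · refine mul_pos hk₀ (Real.cos_pos_of_mem_Ioo ?_)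
      constructor
      · have := (hφ k₀).1; simp only [ht₀]; linarith
      · have := (hφ k₀).2; simp only [ht₀]; linarith
  have hz0 : z ≠ 0 := by
    intro h
    rw [h] at hrepos; simp at hrepos
  have hznorm : (0 : ℝ) < ‖z‖ := norm_pos_iff.mpr hz0
  have hne : Nonempty (Fin n) := by
    obtain ⟨k, _⟩ := hpos; exact ⟨k⟩
  -- rotated point with positive real part
  set z' : ℂ := Complex.exp (((-t₀ : ℝ) : ℂ) * Complex.I) * z with hz'
  have hz're : 0 < z'.re := by
    have h : z'.re = Real.cos t₀ * z.re + Real.sin t₀ * z.im := by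
      rw [hz', Complex.mul_re, Complex.exp_ofReal_mul_I_re, Complex.exp_ofReal_mul_I_im,
        Real.cos_neg, Real.sin_neg]
      ring
    rw [h]; exact hrepos
  have harg : |Complex.arg z'| < π / 2 :=
    Complex.abs_arg_lt_pi_div_two_iff.mpr (Or.inl hz're)
  set a₀ : ℝ := Complex.arg z' + t₀ with ha₀
  have hz'norm : ‖z'‖ = ‖z‖ := by
    rw [hz', norm_mul, Complex.norm_exp_ofReal_mul_I, one_mul]
  have hzeq : z = (‖z‖ : ℂ) * Complex.exp ((a₀ : ℂ) * Complex.I) := by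
    refine Eq.symm ?_
    rw [← hz'norm]
    have h2 : ((a₀ : ℂ)) * Complex.I
        = (z'.arg : ℂ) * Complex.I + ((t₀ : ℝ) : ℂ) * Complex.I := by
      rw [ha₀]; push_cast; ring
    rw [h2, Complex.exp_add, ← mul_assoc, Complex.norm_mul_exp_arg_mul_I, hz']
    rw [mul_comm (Complex.exp _) z, mul_assoc, ← Complex.exp_add]
    have h3 : (((-t₀ : ℝ)) : ℂ) * Complex.I + ((t₀ : ℝ) : ℂ) * Complex.I = 0 := by
      push_cast; ring
    rw [h3, Complex.exp_zero, mul_one]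
  have ha₀mem : a₀ ∈ Set.Ioo θ (θ + π) := by
    rw [abs_lt] at harg
    constructor
    · simp only [ha₀, ht₀]; linarith [harg.1]
    · simp only [ha₀, ht₀]; linarith [harg.2]
  -- uniqueness of the angle in an interval of length π
  have huniq : ∀ a ∈ Set.Ioo θ (θ + π), ∀ b ∈ Set.Ioo θ (θ + π),
      Complex.exp ((a : ℂ) * Complex.I) = Complex.exp ((b : ℂ) * Complex.I) → a = b := by
    intro a ha b hb hab
    rw [Complex.exp_eq_exp_iff_exists_int] at hab
    obtain ⟨m, hm⟩ := hab
    have hm' : (a : ℂ) = b + m * (2 * π) := by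
      have hI : ((a : ℂ) - b - m * (2 * π)) * Complex.I = 0 := by
        rw [sub_mul, sub_mul, hm]; ring
      have := mul_eq_zero.mp hI
      rcases this with h | h
      · linear_combination h
      · exact absurd h Complex.I_ne_zero
    have hr : a = b + m * (2 * π) := by exact_mod_cast hm'
    have habs : |a - b| < π := by
      rw [abs_lt]
      constructor <;> [linarith [ha.1, hb.2]; linarith [ha.2, hb.1]]
    have hm0 : m = 0 := by
      by_contra h
      have h1 : (1 : ℝ) ≤ |(m : ℝ)| := by
        exact_mod_cast Int.one_le_abs (by exact_mod_cast h)
      have hd : a - b = (m : ℝ) * (2 * π) := by rw [hr]; ring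
      have : |a - b| = |(m : ℝ)| * (2 * π) := by
        rw [hd, abs_mul, abs_of_pos (by positivity : (0 : ℝ) < 2 * π)]
      nlinarith [Real.pi_pos]
    rw [hm0] at hr; push_cast at hr; linarith
  refine ⟨hz0, ⟨a₀, ⟨ha₀mem, hzeq⟩, ?_⟩, ?_⟩
  · rintro b ⟨hbmem, hbz⟩
    refine huniq b hbmem a₀ ha₀mem ?_
    have hnz : ((‖z‖ : ℝ) : ℂ) ≠ 0 := by
      exact_mod_cast ne_of_gt hznorm
    exact mul_left_cancel₀ hnz (hbz.symm.trans hzeq)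
  · intro a ha hA
    obtain ⟨M, _, hM⟩ := Finset.exists_max_image Finset.univ φ ⟨hne.some, Finset.mem_univ _⟩
    obtain ⟨m, _, hm⟩ := Finset.exists_min_image Finset.univ φ ⟨hne.some, Finset.mem_univ _⟩
    have hsup : (⨆ k, φ k) = φ M :=
      le_antisymm (ciSup_le fun k => hM k (Finset.mem_univ _))
        (le_ciSup (Set.Finite.bddAbove (Set.finite_range φ)) M)
    have hinf : (⨅ k, φ k) = φ m :=
      le_antisymm (ciInf_le (Set.Finite.bddBelow (Set.finite_range φ)) m)
        (le_ciInf fun k => hm k (Finset.mem_univ _))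
    have hzre : z.re = ‖z‖ * Real.cos a := by
      rw [hA]
      simp [Complex.mul_re, Complex.exp_ofReal_mul_I_re, Complex.exp_ofReal_mul_I_im]
    have hzim : z.im = ‖z‖ * Real.sin a := by
      rw [hA]
      simp [Complex.mul_im, Complex.exp_ofReal_mul_I_re, Complex.exp_ofReal_mul_I_im]
    constructor
    · -- φ m ≤ a
      rw [hinf]
      by_contra h
      push_neg at h
      have h1 : 0 ≤ Real.cos (φ m) * z.im - Real.sin (φ m) * z.re := by
        rw [keysin]
        refine Finset.sum_nonneg fun k _ => mul_nonneg (hc k)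
          (Real.sin_nonneg_of_nonneg_of_le_pi ?_ ?_)
        · linarith [hm k (Finset.mem_univ _)]
        · linarith [(hφ k).2, (hφ m).1]
      have h2 : Real.cos (φ m) * z.im - Real.sin (φ m) * z.re
          = ‖z‖ * Real.sin (a - φ m) := by
        rw [hzre, hzim, Real.sin_sub]; ring
      have h3 : 0 < Real.sin (φ m - a) :=
        Real.sin_pos_of_pos_of_lt_pi (by linarith) (by linarith [(hφ m).2, ha.1])
      have h4 : Real.sin (a - φ m) < 0 := by
        rw [show a - φ m = -(φ m - a) by ring, Real.sin_neg]; linarith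
      nlinarith
    · -- a ≤ φ M
      rw [hsup]
      by_contra h
      push_neg at h
      have h1 : Real.cos (φ M) * z.im - Real.sin (φ M) * z.re ≤ 0 := by
        rw [keysin]
        refine Finset.sum_nonpos fun k _ => mul_nonpos_of_nonneg_of_nonpos (hc k)
          (Real.sin_nonpos_of_nonpos_of_neg_pi_le ?_ ?_)
        · linarith [hM k (Finset.mem_univ _)]
        · linarith [(hφ k).1, (hφ M).2]
      have h2 : Real.cos (φ M) * z.im - Real.sin (φ M) * z.re
          = ‖z‖ * Real.sin (a - φ M) := by
        rw [hzre, hzim, Real.sin_sub]; ring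
      have h3 : 0 < Real.sin (a - φ M) :=
        Real.sin_pos_of_pos_of_lt_pi (by linarith) (by linarith [ha.2, (hφ M).1])
      nlinarith


lemma sectoral_sum {n : ℕ} (φ : Fin n → ℝ) (T D : Matrix (Fin n) (Fin n) ℂ)
    (hD : D.IsDiag) (hDk : ∀ k, D k k = Complex.exp ((φ k : ℂ) * Complex.I))
    (x : Fin n → ℂ) :
    star x ⬝ᵥ (T.conjTranspose * D * T).mulVec x
      = ∑ k, ((Complex.normSq (T.mulVec x k) : ℝ) : ℂ)
          * Complex.exp ((φ k : ℂ) * Complex.I) := by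
  rw [← Matrix.mulVec_mulVec, ← Matrix.mulVec_mulVec, Matrix.dotProduct_mulVec,
    ← Matrix.star_mulVec]
  rw [dotProduct]
  refine Finset.sum_congr rfl fun j _ => ?_
  have hDj : D.mulVec (T.mulVec x) j = D j j * T.mulVec x j := by
    rw [Matrix.mulVec, dotProduct]
    refine Finset.sum_eq_single j (fun k _ hk => ?_) (fun h => absurd (Finset.mem_univ j) h)
    rw [hD (Ne.symm hk), zero_mul]
  rw [hDj, hDk, Pi.star_apply, Complex.star_def, Complex.normSq_eq_conj_mul_self]
  ring

lemma sectoral_attain {n : ℕ} (φ : Fin n → ℝ) (C T D : Matrix (Fin n) (Fin n) ℂ)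
    (hT : IsUnit T) (hD : D.IsDiag)
    (hDk : ∀ k, D k k = Complex.exp ((φ k : ℂ) * Complex.I))
    (hC : C = T.conjTranspose * D * T) (M : Fin n) :
    ∃ x : EuclideanSpace ℂ (Fin n), ‖x‖ = 1 ∧
      star x ⬝ᵥ C.mulVec x
        = (‖star x ⬝ᵥ C.mulVec x‖ : ℂ) * Complex.exp ((φ M : ℂ) * Complex.I) := by
  obtain ⟨u, hu⟩ := hT
  set Ti : Matrix (Fin n) (Fin n) ℂ := ↑u⁻¹ with hTi
  have hTTi : T * Ti = 1 := by rw [hTi, ← hu]; exact u.mul_inv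
  set e : Fin n → ℂ := Pi.single M 1 with he
  set x₀ : EuclideanSpace ℂ (Fin n) := WithLp.toLp 2 (Ti.mulVec e) with hx₀
  have hTx₀ : T.mulVec x₀ = e := by
    show T.mulVec (Ti.mulVec e) = e
    rw [Matrix.mulVec_mulVec, hTTi, Matrix.one_mulVec]
  have hx₀ne : x₀ ≠ 0 := by
    intro h
    have : T.mulVec x₀ = 0 := by
      show T.mulVec (x₀ : Fin n → ℂ) = 0
      have hz : (x₀ : Fin n → ℂ) = 0 := by simp [h]
      rw [hz, Matrix.mulVec_zero]
    rw [hTx₀] at this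
    have := congrFun this M
    rw [he] at this
    simp at this
  set r : ℝ := ‖x₀‖ with hr
  have hrpos : 0 < r := norm_pos_iff.mpr hx₀ne
  set cc : ℂ := ((r⁻¹ : ℝ) : ℂ) with hcc
  refine ⟨cc • x₀, ?_, ?_⟩
  · rw [norm_smul, hcc, Complex.norm_real, Real.norm_eq_abs,
      abs_of_pos (inv_pos.mpr hrpos), ← hr]
    field_simp
  · have hTx : T.mulVec (cc • x₀ : EuclideanSpace ℂ (Fin n)) = cc • e := by
      show T.mulVec (cc • (x₀ : Fin n → ℂ)) = cc • e
      rw [Matrix.mulVec_smul, hTx₀]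
    have hzsum : star (cc • x₀ : EuclideanSpace ℂ (Fin n)) ⬝ᵥ C.mulVec (cc • x₀ : EuclideanSpace ℂ (Fin n))
        = ((Complex.normSq cc : ℝ) : ℂ) * Complex.exp ((φ M : ℂ) * Complex.I) := by
      rw [hC, sectoral_sum φ T D hD hDk]
      rw [show T.mulVec (cc • x₀ : EuclideanSpace ℂ (Fin n)) = cc • e from hTx]
      rw [Finset.sum_eq_single M (fun k _ hk => ?_) (fun h => absurd (Finset.mem_univ M) h)]
      · rw [he]
        simp
      · rw [he]
        simp [Pi.single_eq_of_ne hk]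
    have hnorm : ‖star (cc • x₀ : EuclideanSpace ℂ (Fin n)) ⬝ᵥ C.mulVec (cc • x₀ : EuclideanSpace ℂ (Fin n))‖
        = Complex.normSq cc := by
      rw [hzsum, norm_mul,
        Complex.norm_exp_ofReal_mul_I, mul_one, Complex.norm_real, Real.norm_eq_abs,
        abs_of_nonneg (Complex.normSq_nonneg _)]
    rw [hnorm, hzsum]


/-- The phases of a sectorally decomposed matrix bound the angle of every point of its
numerical range, and both bounds are attained. -/
theorem numericalRange_angle_bounds_of_sectoral_decomposition {n : ℕ} (hn : 0 < n)
    (θ : ℝ) (φ : Fin n → ℝ) (hφ : ∀ k, φ k ∈ Set.Ioo θ (θ + π))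
    (C T D : Matrix (Fin n) (Fin n) ℂ)
    (hT : IsUnit T) (hD : D.IsDiag)
    (hDk : ∀ k, D k k = Complex.exp ((φ k : ℂ) * Complex.I))
    (hC : C = T.conjTranspose * D * T) :
    (∀ x : EuclideanSpace ℂ (Fin n), ‖x‖ = 1 →
      star x ⬝ᵥ C.mulVec x ≠ 0 ∧
      (∃! a : ℝ, a ∈ Set.Ioo θ (θ + π) ∧
        star x ⬝ᵥ C.mulVec x
          = (‖star x ⬝ᵥ C.mulVec x‖ : ℂ) * Complex.exp ((a : ℂ) * Complex.I)) ∧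
      (∀ a ∈ Set.Ioo θ (θ + π),
        star x ⬝ᵥ C.mulVec x
            = (‖star x ⬝ᵥ C.mulVec x‖ : ℂ) * Complex.exp ((a : ℂ) * Complex.I) →
          (⨅ k, φ k) ≤ a ∧ a ≤ ⨆ k, φ k)) ∧
    (∃ x : EuclideanSpace ℂ (Fin n), ‖x‖ = 1 ∧
      star x ⬝ᵥ C.mulVec x
        = (‖star x ⬝ᵥ C.mulVec x‖ : ℂ) * Complex.exp (((⨆ k, φ k : ℝ) : ℂ) * Complex.I)) ∧
    (∃ y : EuclideanSpace ℂ (Fin n), ‖y‖ = 1 ∧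
      star y ⬝ᵥ C.mulVec y
        = (‖star y ⬝ᵥ C.mulVec y‖ : ℂ) * Complex.exp (((⨅ k, φ k : ℝ) : ℂ) * Complex.I)) := by
  have hne : Nonempty (Fin n) := ⟨⟨0, hn⟩⟩
  obtain ⟨u, hu⟩ := hT
  have hTiT : (↑u⁻¹ : Matrix (Fin n) (Fin n) ℂ) * T = 1 := by rw [← hu]; exact u.inv_mul
  refine ⟨?_, ?_, ?_⟩
  · intro x hx
    have hxne : x ≠ 0 := by
      intro h; rw [h, norm_zero] at hx; exact zero_ne_one hx
    have hwne : T.mulVec (x : Fin n → ℂ) ≠ 0 := by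
      intro h
      apply hxne
      have : ((↑u⁻¹ : Matrix (Fin n) (Fin n) ℂ) * T).mulVec (x : Fin n → ℂ)
          = (↑u⁻¹ : Matrix (Fin n) (Fin n) ℂ).mulVec (T.mulVec (x : Fin n → ℂ)) :=
        (Matrix.mulVec_mulVec _ _ _).symm
      rw [hTiT, Matrix.one_mulVec, h, Matrix.mulVec_zero] at this
      exact WithLp.ofLp_injective 2 this
    obtain ⟨k₀, hk₀⟩ := Function.ne_iff.mp hwne
    have hz : star x ⬝ᵥ C.mulVec x
        = ∑ k, ((Complex.normSq (T.mulVec (x : Fin n → ℂ) k) : ℝ) : ℂ)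
            * Complex.exp ((φ k : ℂ) * Complex.I) := by
      rw [hC]; exact sectoral_sum φ T D hD hDk x
    exact sectoral_core θ φ hφ _ (fun k => Complex.normSq_nonneg _)
      ⟨k₀, Complex.normSq_pos.mpr hk₀⟩ _ hz
  · obtain ⟨M, _, hM⟩ := Finset.exists_max_image Finset.univ φ ⟨hne.some, Finset.mem_univ _⟩
    have hsup : (⨆ k, φ k) = φ M :=
      le_antisymm (ciSup_le fun k => hM k (Finset.mem_univ _))
        (le_ciSup (Set.Finite.bddAbove (Set.finite_range φ)) M)
    rw [hsup]
    exact sectoral_attain φ C T D ⟨u, hu⟩ hD hDk hC M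
  · obtain ⟨m, _, hm⟩ := Finset.exists_min_image Finset.univ φ ⟨hne.some, Finset.mem_univ _⟩
    have hinf : (⨅ k, φ k) = φ m :=
      le_antisymm (ciInf_le (Set.Finite.bddBelow (Set.finite_range φ)) m)
        (le_ciInf fun k => hm k (Finset.mem_univ _))
    rw [hinf]
    exact sectoral_attain φ C T D ⟨u, hu⟩ hD hDk hC m
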